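/- Suppose 1 < R₀ < 2e and let Q* ∈ (0,1) satisfy F(Q*) = 0. Then Q* is a locally attractive fixed point of the iteration map T: there exists ε > 0 such that for every initial value Q⁰ with |Q⁰ - Q*| ≤ ε, the iterates Q^{(j)} = T^j(Q⁰) converge to Q* as j → ∞. Moreover, the trivial fixed point Q = 0 is locally repelling in the sense that T'(0) = R₀ > 1. -/

import Mathlib

open MeasureTheory Real Set Filter

/-- `Λ(x,s) = ∫_s^x θ(t) dt`. -/
noncomputable def Lam (θ : ℝ → ℝ) (x s : ℝ) : ℝ := ∫ t in s..x, θ t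

/-- `w(x;Q) = Q e^{-γx} ∫₀^x e^{γs} θ(s) e^{-Q Λ(x,s)} ds`. -/
noncomputable def w (γ : ℝ) (θ : ℝ → ℝ) (Q x : ℝ) : ℝ :=
  Q * Real.exp (-γ * x) * ∫ s in (0:ℝ)..x, Real.exp (γ * s) * θ s * Real.exp (-Q * Lam θ x s)
/-- The kernel `k(x,s) = (p(x)/N)·θ(s)·e^{-γ(x-s)}`. -/
noncomputable def kker (γ N : ℝ) (p θ : ℝ → ℝ) (x s : ℝ) : ℝ :=
  (p x / N) * θ s * Real.exp (-γ * (x - s))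

/-- The triangle `Ω = {(x,s) : 0 ≤ s ≤ x ≤ A}` (first coordinate `x`, second `s`). -/
def Tri (A : ℝ) : Set (ℝ × ℝ) := {q | 0 ≤ q.2 ∧ q.2 ≤ q.1 ∧ q.1 ≤ A}

/-- Basic reproductive number `R₀ = ∬_Ω k(x,s) d(s,x)`. -/
noncomputable def R0 (γ N A : ℝ) (p θ : ℝ → ℝ) : ℝ :=
  ∫ q in Tri A, kker γ N p θ q.1 q.2

/-- `F(Q) = 1 - ∬_Ω k(x,s) e^{-Q Λ(x,s)} d(s,x)`. -/
noncomputable def FF (γ N A : ℝ) (p θ : ℝ → ℝ) (Q : ℝ) : ℝ :=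
  1 - ∫ q in Tri A, kker γ N p θ q.1 q.2 * Real.exp (-Q * Lam θ q.1 q.2)

/-- Iteration map `T(Q) = Q·(1 - F(Q))`. -/
noncomputable def TT (γ N A : ℝ) (p θ : ℝ → ℝ) (Q : ℝ) : ℝ :=
  Q * (1 - FF γ N A p θ Q)

lemma tri_isClosed (A : ℝ) : IsClosed (Tri A) := by
  have h1 : IsClosed {q : ℝ × ℝ | 0 ≤ q.2} := isClosed_le continuous_const continuous_snd
  have h2 : IsClosed {q : ℝ × ℝ | q.2 ≤ q.1} := isClosed_le continuous_snd continuous_fst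
  have h3 : IsClosed {q : ℝ × ℝ | q.1 ≤ A} := isClosed_le continuous_fst continuous_const
  have : Tri A = ({q : ℝ × ℝ | 0 ≤ q.2} ∩ {q | q.2 ≤ q.1}) ∩ {q | q.1 ≤ A} := by
    ext q; simp [Tri, and_assoc]
  rw [this]; exact (h1.inter h2).inter h3

lemma tri_subset (A : ℝ) : Tri A ⊆ (Set.Icc 0 A) ×ˢ (Set.Icc 0 A) := by
  rintro ⟨x, s⟩ ⟨h1, h2, h3⟩
  exact ⟨⟨le_trans h1 h2, h3⟩, ⟨h1, le_trans h2 h3⟩⟩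

lemma tri_isCompact (A : ℝ) : IsCompact (Tri A) :=
  (isCompact_Icc.prod isCompact_Icc).of_isClosed_subset (tri_isClosed A) (tri_subset A)

lemma tri_measurableSet (A : ℝ) : MeasurableSet (Tri A) := (tri_isClosed A).measurableSet

lemma tri_fst {A : ℝ} {q : ℝ × ℝ} (h : q ∈ Tri A) : q.1 ∈ Set.Icc 0 A :=
  ⟨le_trans h.1 h.2.1, h.2.2⟩

lemma tri_snd {A : ℝ} {q : ℝ × ℝ} (h : q ∈ Tri A) : q.2 ∈ Set.Icc 0 A :=
  ⟨h.1, le_trans h.2.1 h.2.2⟩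

lemma aux_hasDeriv (A : ℝ) (L c : ℝ × ℝ → ℝ)
    (hL : ContinuousOn L (Tri A)) (hc : ContinuousOn c (Tri A)) (Q : ℝ) :
    HasDerivAt (fun Q' => ∫ q in Tri A, c q * Real.exp (-Q' * L q))
      (∫ q in Tri A, (-(L q) * c q) * Real.exp (-Q * L q)) Q := by
  obtain ⟨M, hM⟩ := (tri_isCompact A).exists_bound_of_continuousOn hL
  obtain ⟨C, hC⟩ := (tri_isCompact A).exists_bound_of_continuousOn hc
  set M' := max M 0 with hM'def
  set C' := max C 0 with hC'def
  have hM' : ∀ q ∈ Tri A, |L q| ≤ M' := fun q hq => le_trans (hM q hq) (le_max_left _ _)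
  have hC' : ∀ q ∈ Tri A, |c q| ≤ C' := fun q hq => le_trans (hC q hq) (le_max_left _ _)
  have hMnn : 0 ≤ M' := le_max_right _ _
  have contF : ∀ Q' : ℝ, ContinuousOn (fun q => c q * Real.exp (-Q' * L q)) (Tri A) :=
    fun Q' => hc.mul (Real.continuous_exp.comp_continuousOn (hL.const_smul (-Q')))
  have contF' : ContinuousOn (fun q => (-(L q) * c q) * Real.exp (-Q * L q)) (Tri A) :=
    ((hL.neg.mul hc).mul (Real.continuous_exp.comp_continuousOn (hL.const_smul (-Q))))
  have hμ : volume (Tri A) < ⊤ := (tri_isCompact A).measure_lt_top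
  have key := hasDerivAt_integral_of_dominated_loc_of_deriv_le (μ := volume.restrict (Tri A))
      (F := fun Q' q => c q * Real.exp (-Q' * L q))
      (F' := fun Q' q => (-(L q) * c q) * Real.exp (-Q' * L q))
      (x₀ := Q) (bound := fun _ => (M' * C') * Real.exp ((|Q| + 1) * M'))
      (s := Metric.ball Q 1) (Metric.ball_mem_nhds Q one_pos)
      (Eventually.of_forall fun Q' =>
        ((contF Q').aestronglyMeasurable (tri_measurableSet A)))
      ((contF Q).integrableOn_compact (tri_isCompact A))
      (contF'.aestronglyMeasurable (tri_measurableSet A))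
      ?_ ?_ ?_
  · exact key.2
  · -- bound
    filter_upwards [ae_restrict_mem (tri_measurableSet A)] with q hq Q' hQ'
    have h1 : |L q| ≤ M' := hM' q hq
    have h2 : |c q| ≤ C' := hC' q hq
    have hQabs : |Q'| ≤ |Q| + 1 := by
      have := mem_ball_iff_norm.mp hQ'
      calc |Q'| ≤ |Q' - Q| + |Q| := by
            simpa using abs_add_le (Q' - Q) Q
        _ ≤ |Q| + 1 := by rw [Real.norm_eq_abs] at this; linarith
    have hexp : Real.exp (-Q' * L q) ≤ Real.exp ((|Q| + 1) * M') := by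
      apply Real.exp_le_exp.mpr
      calc -Q' * L q ≤ |(-Q') * L q| := le_abs_self _
        _ = |Q'| * |L q| := by rw [abs_mul, abs_neg]
        _ ≤ (|Q| + 1) * M' := by
            apply mul_le_mul hQabs h1 (abs_nonneg _) (by positivity)
    rw [Real.norm_eq_abs, abs_mul, abs_mul, abs_neg, Real.abs_exp]
    apply mul_le_mul _ hexp (Real.exp_pos _).le (by positivity)
    exact mul_le_mul h1 h2 (abs_nonneg _) hMnn
  · -- bound integrable
    exact integrableOn_const hμ.ne
  · -- differentiability
    refine Eventually.of_forall fun q => fun Q' _ => ?_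
    have hrw : (fun Q'' => c q * Real.exp (-Q'' * L q))
        = fun Q'' => c q * Real.exp (-(L q) * Q'') := by
      ext y; ring_nf
    rw [hrw]
    have h := (((hasDerivAt_id Q').const_mul (-(L q))).exp).const_mul (c q)
    have h2 : HasDerivAt (fun Q'' => c q * Real.exp (-(L q) * Q''))
        (c q * (Real.exp (-(L q) * id Q') * (-(L q) * 1))) Q' := h
    refine h2.congr_deriv ?_
    show c q * (Real.exp (-(L q) * Q') * (-(L q) * 1)) = _
    rw [show (-Q' * L q) = (-(L q) * Q') by ring]
    ring

/-- for `1 < R₀ < 2e`, the endemic fixed point `Q*` of `T` is locally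
attractive, while the trivial fixed point `0` is locally repelling (`T'(0) = R₀ > 1`). -/
theorem endemic_fixed_point_attractive (γ A N : ℝ) (hγ : 0 < γ) (hA : 0 < A) (hN : 0 < N)
    (θ p : ℝ → ℝ)
    (hθc : ContinuousOn θ (Set.Icc 0 A)) (hθpos : ∀ x ∈ Set.Icc 0 A, 0 < θ x)
    (hpc : ContinuousOn p (Set.Icc 0 A)) (hppos : ∀ x ∈ Set.Icc 0 A, 0 < p x)
    (hnorm : (1/N) * ∫ x in (0:ℝ)..A, p x = 1)
    (hR0gt : 1 < R0 γ N A p θ) (hR0lt : R0 γ N A p θ < 2 * Real.exp 1)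
    (Qstar : ℝ) (hQmem : Qstar ∈ Set.Ioo (0:ℝ) 1) (hQroot : FF γ N A p θ Qstar = 0) :
    (∃ ε > 0, ∀ Q0 : ℝ, |Q0 - Qstar| ≤ ε →
      Filter.Tendsto (fun j : ℕ => (TT γ N A p θ)^[j] Q0) Filter.atTop (nhds Qstar)) ∧
    (HasDerivAt (TT γ N A p θ) (R0 γ N A p θ) 0 ∧ 1 < R0 γ N A p θ) := by
  -- notation
  set L : ℝ × ℝ → ℝ := fun q => Lam θ q.1 q.2 with hLdef
  set k : ℝ × ℝ → ℝ := fun q => kker γ N p θ q.1 q.2 with hkdef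
  -- continuity of the primitive Φ
  set Φ : ℝ → ℝ := fun x => ∫ t in (0:ℝ)..x, θ t with hΦdef
  have huIcc : Set.uIcc (0:ℝ) A = Set.Icc 0 A := Set.uIcc_of_le hA.le
  have hθint : IntegrableOn θ (Set.uIcc 0 A) volume := by
    rw [huIcc]; exact hθc.integrableOn_compact isCompact_Icc
  have hΦc : ContinuousOn Φ (Set.Icc 0 A) := by
    have := intervalIntegral.continuousOn_primitive_interval (a := (0:ℝ)) (b := A) hθint
    rwa [huIcc] at this
  have hθII : ∀ x ∈ Set.Icc (0:ℝ) A, IntervalIntegrable θ volume 0 x := by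
    intro x hx
    apply ContinuousOn.intervalIntegrable
    apply hθc.mono
    rw [Set.uIcc_of_le hx.1]
    exact Set.Icc_subset_Icc le_rfl hx.2
  have hLamEq : ∀ q ∈ Tri A, L q = Φ q.1 - Φ q.2 := by
    intro q hq
    have := intervalIntegral.integral_interval_sub_left (f := θ) (μ := volume)
      (hθII q.1 (tri_fst hq)) (hθII q.2 (tri_snd hq))
    simp only [hLdef, hΦdef, Lam]
    rw [← this]
  have hLcont : ContinuousOn L (Tri A) := by
    apply ContinuousOn.congr (f := fun q : ℝ × ℝ => Φ q.1 - Φ q.2)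
    · exact (hΦc.comp continuousOn_fst fun q hq => tri_fst hq).sub
        (hΦc.comp continuousOn_snd fun q hq => tri_snd hq)
    · intro q hq; exact hLamEq q hq
  have hLnonneg : ∀ q ∈ Tri A, 0 ≤ L q := by
    intro q hq
    apply intervalIntegral.integral_nonneg hq.2.1
    intro t ht
    exact (hθpos t ⟨le_trans hq.1 ht.1, le_trans ht.2 hq.2.2⟩).le
  have hkcont : ContinuousOn k (Tri A) := by
    apply ContinuousOn.mul
    · apply ContinuousOn.mul
      · exact ((hpc.comp continuousOn_fst fun q hq => tri_fst hq).div_const N)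
      · exact hθc.comp continuousOn_snd fun q hq => tri_snd hq
    · exact Real.continuous_exp.comp_continuousOn
        (((continuous_fst.sub continuous_snd).continuousOn).const_smul (-γ))
  have hknonneg : ∀ q ∈ Tri A, 0 ≤ k q := by
    intro q hq
    have h1 := hppos q.1 (tri_fst hq)
    have h2 := hθpos q.2 (tri_snd hq)
    have := Real.exp_pos (-γ * (q.1 - q.2))
    simp only [hkdef, kker]
    positivity
  -- the parametrized integrals
  set g : ℝ → ℝ := fun Q => ∫ q in Tri A, k q * Real.exp (-Q * L q) with hgdef
  set g' : ℝ → ℝ := fun Q => ∫ q in Tri A, (-(L q) * k q) * Real.exp (-Q * L q) with hg'def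
  have hg : ∀ Q, HasDerivAt g (g' Q) Q := fun Q => aux_hasDeriv A L k hLcont hkcont Q
  have hg' : ∀ Q, HasDerivAt g'
      (∫ q in Tri A, (-(L q) * (-(L q) * k q)) * Real.exp (-Q * L q)) Q :=
    fun Q => aux_hasDeriv A L (fun q => -(L q) * k q) hLcont (hLcont.neg.mul hkcont) Q
  -- TT in terms of g
  have hTTeq : TT γ N A p θ = fun Q => Q * g Q := by
    funext Q
    simp only [TT, FF, hgdef, hkdef, hLdef]
    ring
  have hTd : ∀ Q, HasDerivAt (TT γ N A p θ) (g Q + Q * g' Q) Q := by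
    intro Q
    rw [hTTeq]
    have := (hasDerivAt_id Q).mul (hg Q)
    have h2 : HasDerivAt (fun Q => Q * g Q) (1 * g Q + id Q * g' Q) Q := this
    simpa using h2
  -- value of g at 0 is R0
  have hg0 : g 0 = R0 γ N A p θ := by
    simp only [hgdef, hkdef, neg_zero, zero_mul, Real.exp_zero, mul_one, R0]
  -- Part 2
  have hpart2 : HasDerivAt (TT γ N A p θ) (R0 γ N A p θ) 0 := by
    have := hTd 0
    rwa [zero_mul, add_zero, hg0] at this
  refine ⟨?_, hpart2, hR0gt⟩
  -- g Qstar = 1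
  have hgQ1 : g Qstar = 1 := by
    have : FF γ N A p θ Qstar = 1 - g Qstar := by
      simp only [FF, hgdef, hkdef, hLdef]
    rw [this] at hQroot; linarith
  -- J > 0
  set J : ℝ := ∫ q in Tri A, (L q * k q) * Real.exp (-Qstar * L q) with hJdef
  have hg'Q : g' Qstar = -J := by
    have h1 : g' Qstar = ∫ q in Tri A, -((L q * k q) * Real.exp (-Qstar * L q)) :=
      integral_congr_ae (Eventually.of_forall fun q => by ring)
    rw [h1, integral_neg, hJdef]
  have hintJ : IntegrableOn (fun q => (L q * k q) * Real.exp (-Qstar * L q)) (Tri A) volume :=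
    ((hLcont.mul hkcont).mul
      (Real.continuous_exp.comp_continuousOn (hLcont.const_smul (-Qstar)))).integrableOn_compact
      (tri_isCompact A)
  have hJnonnegae : 0 ≤ᵐ[volume.restrict (Tri A)]
      fun q => (L q * k q) * Real.exp (-Qstar * L q) := by
    filter_upwards [ae_restrict_mem (tri_measurableSet A)] with q hq
    have := hLnonneg q hq
    have := hknonneg q hq
    have := (Real.exp_pos (-Qstar * L q)).le
    positivity
  have hJnonneg : 0 ≤ J := integral_nonneg_of_ae hJnonnegae
  have hJpos : 0 < J := by
    rcases lt_or_eq_of_le hJnonneg with h | h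
    · exact h
    have hzero := (integral_eq_zero_iff_of_nonneg_ae hJnonnegae hintJ).mp h.symm
    have hcongr : (fun q => k q * Real.exp (-Qstar * L q))
        =ᵐ[volume.restrict (Tri A)] k := by
      filter_upwards [hzero] with q hq
      simp only [Pi.zero_apply] at hq
      have hexp := Real.exp_pos (-Qstar * L q)
      have hLk : L q * k q = 0 := by
        by_contra hne
        exact hne (by
          have := mul_eq_zero.mp hq
          rcases this with h' | h'
          · exact h'
          · exact absurd h' hexp.ne')
      rcases mul_eq_zero.mp hLk with h' | h'
      · rw [h']; simp
      · rw [h']; simp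
    have : g Qstar = R0 γ N A p θ := by
      rw [hgdef]
      simp only
      rw [integral_congr_ae hcongr]
      rfl
    rw [hgQ1] at this
    linarith
  -- Qstar * J < 2
  have hQpos : 0 < Qstar := hQmem.1
  have hQJlt2 : Qstar * J < 2 := by
    have hepos : (0:ℝ) < Real.exp 1 := Real.exp_pos 1
    have hmono : Qstar * J ≤ (Real.exp 1)⁻¹ * R0 γ N A p θ := by
      have h1 : Qstar * J = ∫ q in Tri A,
          Qstar * ((L q * k q) * Real.exp (-Qstar * L q)) := by
        rw [hJdef, ← integral_const_mul]
      rw [h1]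
      have h2 : (Real.exp 1)⁻¹ * R0 γ N A p θ = ∫ q in Tri A, (Real.exp 1)⁻¹ * k q := by
        rw [R0, ← integral_const_mul]
      rw [h2]
      have hint1 : IntegrableOn
          (fun q => Qstar * ((L q * k q) * Real.exp (-Qstar * L q))) (Tri A) volume :=
        hintJ.const_mul Qstar
      have hint2 : IntegrableOn (fun q => (Real.exp 1)⁻¹ * k q) (Tri A) volume :=
        (hkcont.integrableOn_compact (tri_isCompact A)).const_mul _
      apply setIntegral_mono_on hint1 hint2 (tri_measurableSet A)
      intro q hq
      set t := Qstar * L q with htdef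
      have ht0 : 0 ≤ t := mul_nonneg hQpos.le (hLnonneg q hq)
      have hte : t * Real.exp (-t) ≤ (Real.exp 1)⁻¹ := by
        have h3 : t ≤ Real.exp (t - 1) := by
          have := Real.add_one_le_exp (t - 1)
          linarith
        calc t * Real.exp (-t) ≤ Real.exp (t - 1) * Real.exp (-t) :=
              mul_le_mul_of_nonneg_right h3 (Real.exp_pos _).le
          _ = Real.exp (-1) := by rw [← Real.exp_add]; ring_nf
          _ = (Real.exp 1)⁻¹ := Real.exp_neg 1
      calc Qstar * ((L q * k q) * Real.exp (-Qstar * L q))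
          = (t * Real.exp (-t)) * k q := by rw [htdef]; ring_nf
        _ ≤ (Real.exp 1)⁻¹ * k q :=
            mul_le_mul_of_nonneg_right hte (hknonneg q hq)
    calc Qstar * J ≤ (Real.exp 1)⁻¹ * R0 γ N A p θ := hmono
      _ < (Real.exp 1)⁻¹ * (2 * Real.exp 1) := by
          apply mul_lt_mul_of_pos_left hR0lt (by positivity)
      _ = 2 := by field_simp
  -- derivative at Qstar has absolute value < 1
  set D : ℝ → ℝ := fun Q => g Q + Q * g' Q with hDdef
  have hDQstar : D Qstar = 1 - Qstar * J := by
    simp only [hDdef]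
    rw [hgQ1, hg'Q]; ring
  have hQJpos : 0 < Qstar * J := mul_pos hQpos hJpos
  have hDabs : |D Qstar| < 1 := by
    rw [hDQstar, abs_lt]; constructor <;> linarith
  set c : ℝ := (|D Qstar| + 1) / 2 with hcdef
  have hc1 : |D Qstar| < c := by rw [hcdef]; linarith
  have hc2 : c < 1 := by rw [hcdef]; linarith
  have hc0 : 0 ≤ c := by
    have := abs_nonneg (D Qstar); rw [hcdef]; linarith
  -- continuity of D at Qstar
  have hDcont : ContinuousAt D Qstar := by
    apply ContinuousAt.add (hg Qstar).continuousAt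
    exact continuousAt_id.mul (hg' Qstar).continuousAt
  have hev : ∀ᶠ Q in nhds Qstar, |D Q| < c :=
    (hDcont.abs.tendsto).eventually_lt_const hc1
  obtain ⟨δ, hδpos, hδ⟩ := Metric.eventually_nhds_iff.mp hev
  set ε : ℝ := δ / 2 with hεdef
  have hεpos : 0 < ε := by positivity
  refine ⟨ε, hεpos, ?_⟩
  intro Q0 hQ0
  -- the interval
  set s : Set ℝ := Set.Icc (Qstar - ε) (Qstar + ε) with hsdef
  have hmemD : ∀ x ∈ s, |D x| < c := by
    intro x hx
    apply hδ
    rw [Real.dist_eq]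
    have h1 : |x - Qstar| ≤ ε := by
      rw [abs_sub_le_iff]; constructor <;> [linarith [hx.2]; linarith [hx.1]]
    calc |x - Qstar| ≤ ε := h1
      _ < δ := by rw [hεdef]; linarith
  have hQstar_mem : Qstar ∈ s := by
    simp only [hsdef, Set.mem_Icc]
    constructor <;> linarith
  have hTfix : TT γ N A p θ Qstar = Qstar := by
    simp [TT, hQroot]
  have hLip : ∀ x ∈ s, ∀ y ∈ s,
      |TT γ N A p θ y - TT γ N A p θ x| ≤ c * |y - x| := by
    intro x hx y hy
    have := Convex.norm_image_sub_le_of_norm_hasDerivWithin_le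
      (f := TT γ N A p θ) (f' := D) (s := s) (C := c)
      (fun z hz => (hTd z).hasDerivWithinAt)
      (fun z hz => (hmemD z hz).le) (convex_Icc _ _) hx hy
    simpa [Real.norm_eq_abs] using this
  -- induction
  have hmem_of_close : ∀ x : ℝ, |x - Qstar| ≤ ε → x ∈ s := by
    intro x hx
    rw [abs_sub_le_iff] at hx
    simp only [hsdef, Set.mem_Icc]
    constructor <;> [linarith [hx.2]; linarith [hx.1]]
  have hind : ∀ j : ℕ, |(TT γ N A p θ)^[j] Q0 - Qstar| ≤ c ^ j * ε := by
    intro j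
    induction j with
    | zero => simpa using hQ0
    | succ n ih =>
      have hcnle : c ^ n * ε ≤ ε := by
        have : c ^ n ≤ 1 := pow_le_one₀ hc0 hc2.le
        nlinarith
      have hxs : (TT γ N A p θ)^[n] Q0 ∈ s := hmem_of_close _ (le_trans ih hcnle)
      rw [Function.iterate_succ_apply']
      calc |TT γ N A p θ ((TT γ N A p θ)^[n] Q0) - Qstar|
          = |TT γ N A p θ ((TT γ N A p θ)^[n] Q0) - TT γ N A p θ Qstar| := by rw [hTfix]
        _ ≤ c * |(TT γ N A p θ)^[n] Q0 - Qstar| := hLip Qstar hQstar_mem _ hxs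
        _ ≤ c * (c ^ n * ε) := by
            apply mul_le_mul_of_nonneg_left ih hc0
        _ = c ^ (n + 1) * ε := by ring
  -- conclude
  apply tendsto_iff_dist_tendsto_zero.mpr
  apply squeeze_zero (fun j => dist_nonneg) (fun j => ?_)
    (g := fun j : ℕ => c ^ j * ε)
  · have := (tendsto_pow_atTop_nhds_zero_of_lt_one hc0 hc2).mul_const ε
    simpa using this
  · rw [Real.dist_eq]; exact hind j
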